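/- Let G be a metabelian group with metabelian decomposition 0 → M → G → A → 1, A a finitely generated abelian group, and let Iₙ = ker(Z[A] → Z/n). Let H be a normal subgroup of G with H ∩ M ⊆ N for a Z[A]-submodule N of M. Then [pₙ(H), G] ⊆ N·Iₙ, where pₙ(H) is the normal subgroup of G generated by {hⁿ : h ∈ H}. -/

import Mathlib

/-- `pₙ(H)`: the normal subgroup of `G` generated by the `n`-th powers of elements
of `H`. -/
def pPow {G : Type*} [Group G] (n : ℕ) (H : Subgroup G) : Subgroup G :=
  Subgroup.normalClosure {x | ∃ h ∈ H, x = h ^ n}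

open scoped commutatorElement

lemma commutator_mul_left {G : Type*} [Group G] (a b c : G) :
    ⁅a * b, c⁆ = a * ⁅b, c⁆ * a⁻¹ * ⁅a, c⁆ := by
  simp only [commutatorElement_def]; group

lemma commutator_pow_of_central {G : Type*} [Group G] (h g : G)
    (hc : ∀ x : G, ⁅h, g⁆ * x = x * ⁅h, g⁆) (n : ℕ) :
    ⁅h ^ n, g⁆ = ⁅h, g⁆ ^ n := by
  induction n with
  | zero => simp [commutatorElement_def]
  | succ k ih =>
    rw [pow_succ, commutator_mul_left, ih, ← hc (h ^ k), mul_assoc, mul_assoc ⁅h, g⁆, mul_inv_cancel_left,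
      ← pow_succ']

/-- Let `G` be a metabelian group with metabelian decomposition
`0 → M → G → A → 1` (`M` a normal abelian subgroup containing `[G,G]`, `A = G/M` a
finitely generated abelian group) and let `Iₙ = ker(ℤ[A] → ℤ/n)`. Let `H` be a normal
subgroup of `G` and `N` a `ℤ[A]`-submodule of `M` (i.e. a normal subgroup of `G`
contained in `M`) with `H ∩ M ⊆ N`. Then `[pₙ(H), G] ⊆ N·Iₙ`, where `pₙ(H)` is the
normal subgroup generated by `{hⁿ : h ∈ H}`. (Here `N·Iₙ = pₙ(N)·[N,G]`, since
`Iₙ = I + (n)` with `I` the augmentation ideal and `m·(g−1) = [m,g]`, `m·n = mⁿ`.) -/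
theorem stmt12 (G : Type*) [Group G] (n : ℕ) (M : Subgroup G) [M.Normal]
    (hab : ∀ x ∈ M, ∀ y ∈ M, x * y = y * x)
    (hder : ⁅(⊤ : Subgroup G), (⊤ : Subgroup G)⁆ ≤ M)
    (hfg : Group.FG (G ⧸ M))
    (N : Subgroup G) [N.Normal] (hNM : N ≤ M)
    (H : Subgroup G) [H.Normal] (hHM : H ⊓ M ≤ N) :
    ⁅pPow n H, (⊤ : Subgroup G)⁆ ≤ pPow n N ⊔ ⁅N, (⊤ : Subgroup G)⁆ := by
  set K : Subgroup G := pPow n N ⊔ ⁅N, (⊤ : Subgroup G)⁆ with hK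
  have hK1 : (pPow n N).Normal := Subgroup.normalClosure_normal
  have hKnormal : K.Normal := Subgroup.sup_normal _ _
  let φ : G →* G ⧸ K := QuotientGroup.mk' K
  have hker : ∀ x : G, φ x = 1 ↔ x ∈ K := fun x => QuotientGroup.eq_one_iff x
  have hφsurj : Function.Surjective φ := QuotientGroup.mk'_surjective K
  -- image of N is central
  have hNcent : ∀ a ∈ N, ∀ y : G ⧸ K, φ a * y = y * φ a := by
    intro a ha y
    obtain ⟨g, rfl⟩ := hφsurj y
    have : ⁅a, g⁆ ∈ K := hK ▸ Subgroup.mem_sup_right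
      (Subgroup.commutator_mem_commutator ha (Subgroup.mem_top g))
    have h1 : φ ⁅a, g⁆ = 1 := (hker _).mpr this
    have h2 : ⁅φ a, φ g⁆ = 1 := by rw [← map_commutatorElement]; exact h1
    have := commutatorElement_eq_one_iff_mul_comm.mp h2
    exact this
  -- nth powers of N die
  have hNpow : ∀ a ∈ N, φ (a ^ n) = 1 := by
    intro a ha
    refine (hker _).mpr (hK ▸ Subgroup.mem_sup_left ?_)
    exact Subgroup.subset_normalClosure ⟨a, ha, rfl⟩
  -- [h,g] ∈ N for h ∈ H
  have hHGN : ∀ h ∈ H, ∀ g : G, ⁅h, g⁆ ∈ N := by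
    intro h hh g
    refine hHM ⟨?_, hder (Subgroup.commutator_mem_commutator (Subgroup.mem_top h)
      (Subgroup.mem_top g))⟩
    have : h * (g * h⁻¹ * g⁻¹) ∈ H :=
      mul_mem hh (by simpa [mul_assoc] using Subgroup.Normal.conj_mem ‹H.Normal› h⁻¹ (inv_mem hh) g)
    simpa [commutatorElement_def, mul_assoc] using this
  -- images of hⁿ are central
  have hcent : ∀ h ∈ H, φ (h ^ n) ∈ Subgroup.center (G ⧸ K) := by
    intro h hh
    rw [Subgroup.mem_center_iff]
    intro y
    obtain ⟨g, rfl⟩ := hφsurj y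
    have hc : ∀ x : G ⧸ K, ⁅φ h, φ g⁆ * x = x * ⁅φ h, φ g⁆ := by
      intro x
      rw [← map_commutatorElement]
      exact hNcent _ (hHGN h hh g) x
    have key : ⁅(φ h) ^ n, φ g⁆ = 1 := by
      rw [commutator_pow_of_central _ _ hc, ← map_commutatorElement, ← map_pow]
      exact hNpow _ (hHGN h hh g)
    have := commutatorElement_eq_one_iff_mul_comm.mp key
    rw [map_pow]
    exact this.symm
  -- pPow n H maps into the center
  have hle : pPow n H ≤ (Subgroup.center (G ⧸ K)).comap φ := by
    apply Subgroup.normalClosure_le_normal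
    rintro x ⟨h, hh, rfl⟩
    exact hcent h hh
  rw [Subgroup.commutator_le]
  intro g₁ hg₁ g₂ _
  refine (hker _).mp ?_
  rw [map_commutatorElement, commutatorElement_eq_one_iff_mul_comm]
  exact Subgroup.mem_center_iff.mp (hle hg₁) (φ g₂) |>.symm
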